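/- Let G be a split graph whose vertex set partitions into a maximum clique K of size k = χ(G) and an independent set S of size s, with S nonempty. Then every proper k-vertex coloring of G has all color classes of odd size if and only if every vertex of S has degree exactly k−1 and every vertex of K has degree of parity opposite to that of k + s. -/

import Mathlib

open Finset

-- The vertex label induced by an edge coloring: `twinLabel G s v = Σ_{e ∈ E_v} s e` in `ZMod k`.
open scoped Classical in
noncomputable def twinLabel {V : Type*} [Fintype V] (G : SimpleGraph V) {k : ℕ}
    (s : Sym2 V → ZMod k) (v : V) : ZMod k :=
  ∑ e ∈ G.incidenceFinset v, s e

/-- `s` is an improper twin `k`-edge coloring of `G`: the induced vertex labeling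
is a proper vertex coloring. -/
def IsImproperTwin {V : Type*} [Fintype V] (G : SimpleGraph V) (k : ℕ)
    (s : Sym2 V → ZMod k) : Prop :=
  ∀ ⦃u v : V⦄, G.Adj u v → twinLabel G s u ≠ twinLabel G s v

/-- The improper twin chromatic index: the least `k ≥ 2` admitting an improper twin
`k`-edge coloring. -/
noncomputable def improperTwinIndex {V : Type*} [Fintype V] (G : SimpleGraph V) : ℕ :=
  sInf {k | 2 ≤ k ∧ ∃ s : Sym2 V → ZMod k, IsImproperTwin G k s}

theorem stmt_17 {V : Type*} [Fintype V] [DecidableEq V] (G : SimpleGraph V)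
    [DecidableRel G.Adj]
    (K S : Finset V) (hpart : ∀ v : V, v ∈ K ↔ v ∉ S)
    (hK : ∀ u ∈ K, ∀ w ∈ K, u ≠ w → G.Adj u w)
    (hS : ∀ u ∈ S, ∀ w ∈ S, ¬ G.Adj u w)
    (k : ℕ) (hk : K.card = k) (hχ : G.chromaticNumber = k)
    (hSne : S.Nonempty) :
    (∀ C : G.Coloring (Fin k), ∀ i : Fin k, Odd (C.colorClass i).ncard) ↔
      ((∀ v ∈ S, G.degree v = k - 1) ∧
        ∀ v ∈ K, ¬ (Even (G.degree v) ↔ Even (k + S.card))) := by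
  classical
  obtain ⟨v₀, hv₀S⟩ := hSne
  have hcol : G.Colorable k := by
    rw [← SimpleGraph.chromaticNumber_le_iff_colorable, hχ]
  obtain ⟨C₀⟩ := hcol
  have hk1 : 1 ≤ k := (C₀ v₀).pos
  have hinj : ∀ (C : G.Coloring (Fin k)), ∀ u ∈ K, ∀ w ∈ K, C u = C w → u = w := by
    intro C u hu w hw h
    by_contra hne
    exact C.valid (hK u hu w hw hne) h
  have himg : ∀ (C : G.Coloring (Fin k)), K.image C = Finset.univ := by
    intro C
    apply Finset.eq_univ_of_card
    rw [Finset.card_image_of_injOn (fun u hu w hw h => hinj C u hu w hw h), hk,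
      Fintype.card_fin]
  have hNS : ∀ v ∈ S, G.neighborFinset v ⊆ K := by
    intro v hv w hw
    rw [SimpleGraph.mem_neighborFinset] at hw
    exact (hpart w).2 fun hwS => hS v hv w hwS hw
  have hdegS_le : ∀ v ∈ S, G.degree v ≤ k - 1 := by
    intro v hv
    have himg2 : (G.neighborFinset v).image C₀ ⊆ Finset.univ.erase (C₀ v) := by
      intro c hc
      rw [Finset.mem_image] at hc
      obtain ⟨w, hw, rfl⟩ := hc
      rw [SimpleGraph.mem_neighborFinset] at hw
      exact Finset.mem_erase.mpr ⟨fun h => C₀.valid hw h.symm, Finset.mem_univ _⟩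
    have hcardimg : ((G.neighborFinset v).image C₀).card = G.degree v := by
      rw [Finset.card_image_of_injOn
        (fun a ha b hb h => hinj C₀ a (hNS v hv ha) b (hNS v hv hb) h)]
      rfl
    have := Finset.card_le_card himg2
    rwa [hcardimg, Finset.card_erase_of_mem (Finset.mem_univ _), Finset.card_univ,
      Fintype.card_fin] at this
  have hdegK : ∀ u ∈ K, G.degree u = (k - 1) + (S.filter (fun v => G.Adj u v)).card := by
    intro u hu
    have hset : G.neighborFinset u = K.erase u ∪ S.filter (fun v => G.Adj u v) := by
      ext w
      simp only [SimpleGraph.mem_neighborFinset, Finset.mem_union, Finset.mem_erase,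
        Finset.mem_filter]
      constructor
      · intro h
        by_cases hwS : w ∈ S
        · exact Or.inr ⟨hwS, h⟩
        · exact Or.inl ⟨fun he => G.ne_of_adj h he.symm, (hpart w).2 hwS⟩
      · rintro (⟨hne, hwK⟩ | ⟨_, h⟩)
        · exact hK u hu w hwK (fun he => hne he.symm)
        · exact h
    have hdisj : Disjoint (K.erase u) (S.filter (fun v => G.Adj u v)) := by
      rw [Finset.disjoint_left]
      intro x hx hx'
      exact (hpart x).1 (Finset.mem_of_mem_erase hx) (Finset.mem_filter.1 hx').1
    show (G.neighborFinset u).card = _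
    rw [hset, Finset.card_union_of_disjoint hdisj, Finset.card_erase_of_mem hu, hk]
  have hforce : (∀ v ∈ S, G.degree v = k - 1) → ∀ (C : G.Coloring (Fin k)),
      ∀ u ∈ K, ∀ v ∈ S, (C v = C u ↔ ¬ G.Adj u v) := by
    intro hdeg C u hu v hv
    constructor
    · intro h hadj
      exact C.valid hadj h.symm
    · intro hna
      have hsub : G.neighborFinset v ⊆ K.erase u := by
        intro w hw
        refine Finset.mem_erase.mpr ⟨?_, hNS v hv hw⟩
        rintro rfl
        exact hna ((SimpleGraph.mem_neighborFinset _ _ _).1 hw).symm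
      have hNv : G.neighborFinset v = K.erase u := by
        apply Finset.eq_of_subset_of_card_le hsub
        rw [Finset.card_erase_of_mem hu, hk]
        have : (G.neighborFinset v).card = G.degree v := rfl
        rw [this, hdeg v hv]
      have : C v ∈ K.image C := by rw [himg C]; exact Finset.mem_univ _
      obtain ⟨w, hwK, hwc⟩ := Finset.mem_image.mp this
      by_cases hwu : w = u
      · subst hwu; exact hwc.symm
      · exfalso
        have hwN : w ∈ G.neighborFinset v := by
          rw [hNv]; exact Finset.mem_erase.mpr ⟨hwu, hwK⟩
        exact C.valid ((SimpleGraph.mem_neighborFinset _ _ _).1 hwN) hwc.symm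
  have hclass : (∀ v ∈ S, G.degree v = k - 1) → ∀ (C : G.Coloring (Fin k)), ∀ u ∈ K,
      C.colorClass (C u) = ↑(insert u (S.filter fun v => ¬ G.Adj u v)) := by
    intro hdeg C u hu
    ext w
    simp only [SimpleGraph.Coloring.colorClass, Set.mem_setOf_eq, Finset.coe_insert,
      Set.mem_insert_iff, Finset.coe_filter, Set.mem_setOf_eq]
    constructor
    · intro h
      by_cases hwS : w ∈ S
      · exact Or.inr ⟨hwS, (hforce hdeg C u hu w hwS).1 h⟩
      · exact Or.inl (hinj C w ((hpart w).2 hwS) u hu h)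
    · rintro (rfl | ⟨hwS, hna⟩)
      · rfl
      · exact (hforce hdeg C u hu w hwS).2 hna
  have hcard : ∀ u ∈ K, (insert u (S.filter fun v => ¬ G.Adj u v)).card
      = 1 + (S.card - (S.filter (fun v => G.Adj u v)).card) := by
    intro u hu
    rw [Finset.card_insert_of_notMem
      (fun h => (hpart u).1 hu (Finset.mem_filter.1 h).1)]
    have := Finset.card_filter_add_card_filter_not
      (s := S) (p := fun v => G.Adj u v)
    omega
  constructor
  · intro hOdd
    have h1 : ∀ v ∈ S, G.degree v = k - 1 := by
      intro v hv
      by_contra hne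
      have hlt : G.degree v + 1 ≤ k - 1 := by
        have := hdegS_le v hv; omega
      set A : Finset (Fin k) := insert (C₀ v) ((G.neighborFinset v).image C₀) with hA
      have hAcard : A.card < k := by
        have h1' : ((G.neighborFinset v).image C₀).card ≤ G.degree v :=
          Finset.card_image_le
        have h2' := Finset.card_insert_le (C₀ v) ((G.neighborFinset v).image C₀)
        rw [← hA] at h2'
        omega
      have hAne : Aᶜ.Nonempty := by
        rw [← Finset.card_pos, Finset.card_compl, Fintype.card_fin]; omega
      obtain ⟨j, hj⟩ := hAne
      rw [Finset.mem_compl] at hj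
      have hjv : j ≠ C₀ v := fun h => hj (h ▸ Finset.mem_insert_self _ _)
      have hjN : ∀ w, G.Adj v w → j ≠ C₀ w := by
        intro w hw h
        exact hj (Finset.mem_insert_of_mem (Finset.mem_image.mpr
          ⟨w, (SimpleGraph.mem_neighborFinset _ _ _).mpr hw, h.symm⟩))
      let f : V → Fin k := fun w => if w = v then j else C₀ w
      have hvalid : ∀ {a b : V}, G.Adj a b → f a ≠ f b := by
        intro a b hab
        by_cases ha : a = v
        · subst ha
          have hb : b ≠ a := fun h => G.loopless.irrefl a (h ▸ hab)
          simp only [f, if_pos rfl, if_neg hb]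
          exact hjN b hab
        · by_cases hb : b = v
          · subst hb
            simp only [f, if_neg ha, if_pos rfl]
            exact fun h => hjN a hab.symm h.symm
          · simp only [f, if_neg ha, if_neg hb]
            exact C₀.valid hab
      let C' : G.Coloring (Fin k) := SimpleGraph.Coloring.mk f hvalid
      have hC' : ∀ w, C' w = f w := fun _ => rfl
      have hclassEq : C'.colorClass (C₀ v) = C₀.colorClass (C₀ v) \ {v} := by
        ext w
        simp only [SimpleGraph.Coloring.colorClass, Set.mem_setOf_eq, Set.mem_diff,
          Set.mem_singleton_iff]
        constructor
        · intro h
          rw [hC'] at h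
          have hw : w ≠ v := by
            rintro rfl
            simp only [f, if_pos rfl] at h
            exact hjv h
          simp only [f, if_neg hw] at h
          exact ⟨h, hw⟩
        · rintro ⟨h, hw⟩
          rw [hC']
          simpa [f, if_neg hw] using h
      have hO1 := hOdd C₀ (C₀ v)
      have hO2 := hOdd C' (C₀ v)
      rw [hclassEq, Set.ncard_diff_singleton_of_mem (C₀.mem_colorClass v)] at hO2
      have hpos : 0 < (C₀.colorClass (C₀ v)).ncard :=
        (Set.ncard_pos (Set.toFinite _)).mpr ⟨v, C₀.mem_colorClass v⟩
      rw [Nat.odd_iff] at hO1 hO2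
      omega
    refine ⟨h1, ?_⟩
    intro u hu
    have hO := hOdd C₀ (C₀ u)
    rw [hclass h1 C₀ u hu, Set.ncard_coe_finset, hcard u hu] at hO
    have ha := Finset.card_filter_le S (fun v => G.Adj u v)
    have hd := hdegK u hu
    rw [Nat.odd_iff] at hO
    rw [Nat.even_iff, Nat.even_iff]
    omega
  · rintro ⟨h1, h2⟩ C i
    have hi : i ∈ K.image C := by rw [himg C]; exact Finset.mem_univ _
    obtain ⟨u, hu, rfl⟩ := Finset.mem_image.mp hi
    rw [hclass h1 C u hu, Set.ncard_coe_finset, hcard u hu]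
    have ha := Finset.card_filter_le S (fun v => G.Adj u v)
    have hd := hdegK u hu
    have h2u := h2 u hu
    rw [Nat.even_iff, Nat.even_iff] at h2u
    rw [Nat.odd_iff]
    omega
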